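/- (Abstract form of the converse implication of Theorem 2.1, after Chatterjee.) Let E : [0, ∞) → [0, ∞) be a function such that E is nonincreasing and the map t ↦ e^{t} E(t) is nonincreasing. Let ε > 0 and δ > 0. If e^{t} E(t) ≤ ε · E(0) for every t ≥ δ, then ∫_0^∞ E(t) dt ≤ (ε + δ) · E(0). -/

import Mathlib

open scoped BigOperators ENNReal

/-- abstract converse implication of Theorem 2.1, after Chatterjee:
if `E : [0,∞) → [0,∞)` is nonincreasing, `t ↦ e^t E t` is nonincreasing, and
`e^t E t ≤ ε·E 0` for every `t ≥ δ`, then `∫_0^∞ E(t) dt ≤ (ε + δ)·E 0`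
(Lebesgue integral). -/
theorem stmt_5 (E : ℝ → ℝ) (hE0 : ∀ t, 0 ≤ t → 0 ≤ E t)
    (hmono : AntitoneOn E (Set.Ici 0))
    (hmono' : AntitoneOn (fun t => Real.exp t * E t) (Set.Ici 0))
    (ε δ : ℝ) (hε : 0 < ε) (hδ : 0 < δ)
    (hchaos : ∀ t : ℝ, δ ≤ t → Real.exp t * E t ≤ ε * E 0) :
    ∫⁻ t in Set.Ioi (0 : ℝ), ENNReal.ofReal (E t) ≤ ENNReal.ofReal ((ε + δ) * E 0) := by
  have hE00 : 0 ≤ E 0 := hE0 0 le_rfl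
  -- split the domain
  have hsplit : (Set.Ioi (0:ℝ)) = Set.Ioc 0 δ ∪ Set.Ioi δ := by
    rw [Set.Ioc_union_Ioi_eq_Ioi hδ.le]
  rw [hsplit,
    MeasureTheory.lintegral_union measurableSet_Ioi (Set.Ioc_disjoint_Ioi le_rfl)]
  -- first piece: E t ≤ E 0 on (0, δ]
  have h1 : ∫⁻ t in Set.Ioc (0:ℝ) δ, ENNReal.ofReal (E t) ≤
      ENNReal.ofReal (δ * E 0) := by
    calc ∫⁻ t in Set.Ioc (0:ℝ) δ, ENNReal.ofReal (E t)
        ≤ ∫⁻ _ in Set.Ioc (0:ℝ) δ, ENNReal.ofReal (E 0) := by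
          refine MeasureTheory.setLIntegral_mono' measurableSet_Ioc fun t ht => ?_
          exact ENNReal.ofReal_le_ofReal (hmono (Set.mem_Ici.mpr le_rfl) (Set.mem_Ici.mpr (le_of_lt ht.1)) ht.1.le)
      _ = ENNReal.ofReal (E 0) * ENNReal.ofReal δ := by
          rw [MeasureTheory.lintegral_const, MeasureTheory.Measure.restrict_apply
            MeasurableSet.univ, Set.univ_inter, Real.volume_Ioc, sub_zero]
      _ = ENNReal.ofReal (δ * E 0) := by
          rw [← ENNReal.ofReal_mul hE00, mul_comm]
  -- second piece: E t ≤ ε * E 0 * exp (-t) on (δ, ∞)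
  have h2 : ∫⁻ t in Set.Ioi δ, ENNReal.ofReal (E t) ≤
      ENNReal.ofReal (ε * E 0) := by
    have hbound : ∀ t ∈ Set.Ioi δ, ENNReal.ofReal (E t) ≤
        ENNReal.ofReal (ε * E 0) * ENNReal.ofReal (Real.exp (-t)) := by
      intro t ht
      rw [← ENNReal.ofReal_mul (mul_nonneg hε.le hE00)]
      apply ENNReal.ofReal_le_ofReal
      calc E t = Real.exp (-t) * (Real.exp t * E t) := by
              rw [← mul_assoc, ← Real.exp_add]; simp
        _ ≤ Real.exp (-t) * (ε * E 0) :=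
              mul_le_mul_of_nonneg_left (hchaos t ht.le) (Real.exp_pos _).le
        _ = ε * E 0 * Real.exp (-t) := by ring
    calc ∫⁻ t in Set.Ioi δ, ENNReal.ofReal (E t)
        ≤ ∫⁻ t in Set.Ioi δ, ENNReal.ofReal (ε * E 0) * ENNReal.ofReal (Real.exp (-t)) := by
          refine MeasureTheory.setLIntegral_mono' measurableSet_Ioi hbound
      _ = ENNReal.ofReal (ε * E 0) * ∫⁻ t in Set.Ioi δ, ENNReal.ofReal (Real.exp (-t)) := by
          rw [MeasureTheory.lintegral_const_mul]
          exact (Real.measurable_exp.comp measurable_neg).ennreal_ofReal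
      _ = ENNReal.ofReal (ε * E 0) * ENNReal.ofReal (Real.exp (-δ)) := by
          congr 1
          rw [← MeasureTheory.ofReal_integral_eq_lintegral_ofReal
            (exp_neg_integrableOn_Ioi δ one_pos |>.congr_fun (fun x _ => by simp) measurableSet_Ioi)
            (MeasureTheory.ae_of_all _ fun x => (Real.exp_pos _).le)]
          rw [integral_exp_neg_Ioi]
      _ ≤ ENNReal.ofReal (ε * E 0) * 1 := by
          gcongr
          exact ENNReal.ofReal_le_one.mpr (Real.exp_le_one_iff.mpr (by linarith))
      _ = ENNReal.ofReal (ε * E 0) := mul_one _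
  calc _ ≤ ENNReal.ofReal (δ * E 0) + ENNReal.ofReal (ε * E 0) := add_le_add h1 h2
    _ = ENNReal.ofReal ((ε + δ) * E 0) := by
        rw [← ENNReal.ofReal_add (mul_nonneg hδ.le hE00) (mul_nonneg hε.le hE00)]
        ring_nf
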